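/- If (v,w) is a pair of symmetric 4×4 complex matrices satisfying the Plücker relations of G(3,6), then the rank of v equals 2 if and only if the rank of w equals 2. -/

import Mathlib

open Matrix

/-- The smaller element `ǐ₁` of the complement of a 2-element subset `{i₁, i₂}`
of `{1,2,3,4}` (indexed by `Fin 4`). -/
def dual₁ (i₁ i₂ : Fin 4) : Fin 4 :=
  (({i₁, i₂}ᶜ : Finset (Fin 4))).min' (by
    rw [← Finset.card_pos, Finset.card_compl]
    have h : ({i₁, i₂} : Finset (Fin 4)).card ≤ 2 :=
      (Finset.card_insert_le _ _).trans (by simp)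
    simp only [Fintype.card_fin]
    omega)

/-- The larger element `ǐ₂` of the complement of a 2-element subset `{i₁, i₂}`
of `{1,2,3,4}` (indexed by `Fin 4`). -/
def dual₂ (i₁ i₂ : Fin 4) : Fin 4 :=
  (({i₁, i₂}ᶜ : Finset (Fin 4))).max' (by
    rw [← Finset.card_pos, Finset.card_compl]
    have h : ({i₁, i₂} : Finset (Fin 4)).card ≤ 2 :=
      (Finset.card_insert_le _ _).trans (by simp)
    simp only [Fintype.card_fin]
    omega)

/-- The sign `ε(I)` of the permutation sending `(1,2,3,4)` to `(i₁,i₂,ǐ₁,ǐ₂)`,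
for `I = {i₁ < i₂}` with complement `Ǐ = {ǐ₁ < ǐ₂}`. -/
noncomputable def eps (i₁ i₂ : Fin 4) : ℂ :=
  if h : Function.Bijective ![i₁, i₂, dual₁ i₁ i₂, dual₂ i₁ i₂] then
    ((Equiv.Perm.sign (Equiv.ofBijective _ h) : ℤ) : ℂ)
  else 0

/-- The 2×2 minor `m[I,J] = m_{i₁j₁}m_{i₂j₂} − m_{i₁j₂}m_{i₂j₁}`. -/
def minor (m : Matrix (Fin 4) (Fin 4) ℂ) (i₁ i₂ j₁ j₂ : Fin 4) : ℂ :=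
  m i₁ j₁ * m i₂ j₂ - m i₁ j₂ * m i₂ j₁

/-- The pair `(v,w)` of symmetric 4×4 complex matrices satisfies the Plücker
relations of `G(3,6)` (the generators of the Plücker ideal of the embedding
`G(3,∧²V₄) ⊂ ℙ(S²V₄ ⊕ S²V₄*)` given by the double spin decomposition):
(i) `v[I,J] = ε(I)ε(J)·w[Ǐ,J̌]` for all 2-element subsets `I, J`, and
(ii) `v·w` has vanishing off-diagonal entries and equal diagonal entries. -/
structure PluckerPair (v w : Matrix (Fin 4) (Fin 4) ℂ) : Prop where
  symm_v : v.IsSymm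
  symm_w : w.IsSymm
  minor_rel : ∀ i₁ i₂ j₁ j₂ : Fin 4, i₁ < i₂ → j₁ < j₂ →
    minor v i₁ i₂ j₁ j₂ =
      eps i₁ i₂ * eps j₁ j₂ *
        minor w (dual₁ i₁ i₂) (dual₂ i₁ i₂) (dual₁ j₁ j₂) (dual₂ j₁ j₂)
  offDiag : ∀ i j : Fin 4, i ≠ j → (v * w) i j = 0
  diag : ∀ i j : Fin 4, (v * w) i i = (v * w) j j

lemma dual_bij : ∀ i₁ i₂ : Fin 4, i₁ < i₂ →
    Function.Bijective ![i₁, i₂, dual₁ i₁ i₂, dual₂ i₁ i₂] := by decide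

lemma dual_lt : ∀ i₁ i₂ : Fin 4, i₁ < i₂ → dual₁ i₁ i₂ < dual₂ i₁ i₂ := by decide

lemma dual_dual₁ : ∀ i₁ i₂ : Fin 4, i₁ < i₂ →
    dual₁ (dual₁ i₁ i₂) (dual₂ i₁ i₂) = i₁ := by decide

lemma dual_dual₂ : ∀ i₁ i₂ : Fin 4, i₁ < i₂ →
    dual₂ (dual₁ i₁ i₂) (dual₂ i₁ i₂) = i₂ := by decide

lemma eps_ne_zero {i₁ i₂ : Fin 4} (h : i₁ < i₂) : eps i₁ i₂ ≠ 0 := by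
  rw [eps, dif_pos (dual_bij i₁ i₂ h)]
  rcases Int.units_eq_one_or
      (Equiv.Perm.sign (Equiv.ofBijective _ (dual_bij i₁ i₂ h))) with h1 | h1 <;>
    rw [h1] <;> norm_num

lemma minor_swap_rows (m : Matrix (Fin 4) (Fin 4) ℂ) (a b c d : Fin 4) :
    minor m b a c d = - minor m a b c d := by unfold minor; ring

lemma minor_swap_cols (m : Matrix (Fin 4) (Fin 4) ℂ) (a b c d : Fin 4) :
    minor m a b d c = - minor m a b c d := by unfold minor; ring

lemma exists_ordered_minor {m : Matrix (Fin 4) (Fin 4) ℂ}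
    (h : ∃ i₁ i₂ j₁ j₂, minor m i₁ i₂ j₁ j₂ ≠ 0) :
    ∃ i₁ i₂ j₁ j₂, i₁ < i₂ ∧ j₁ < j₂ ∧ minor m i₁ i₂ j₁ j₂ ≠ 0 := by
  obtain ⟨a, b, c, d, h⟩ := h
  have hab : a ≠ b := by rintro rfl; exact h (by unfold minor; ring)
  have hcd : c ≠ d := by rintro rfl; exact h (by unfold minor; ring)
  rcases lt_or_gt_of_ne hab with h1 | h1 <;> rcases lt_or_gt_of_ne hcd with h2 | h2
  · exact ⟨a, b, c, d, h1, h2, h⟩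
  · exact ⟨a, b, d, c, h1, h2, by rw [minor_swap_cols]; simpa using h⟩
  · exact ⟨b, a, c, d, h1, h2, by rw [minor_swap_rows]; simpa using h⟩
  · exact ⟨b, a, d, c, h1, h2, by rw [minor_swap_rows, minor_swap_cols]; simpa using h⟩

lemma rank_submatrix_le' (A : Matrix (Fin 4) (Fin 4) ℂ) (f g : Fin 2 → Fin 4) :
    (A.submatrix f g).rank ≤ A.rank := by
  have h : A.submatrix f g =
      (Matrix.of fun (a : Fin 2) (b : Fin 4) => if b = f a then (1 : ℂ) else 0) * A *
      (Matrix.of fun (a : Fin 4) (b : Fin 2) => if a = g b then (1 : ℂ) else 0) := by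
    ext a b
    simp [Matrix.mul_apply, ite_mul, mul_ite, Finset.sum_ite_eq, Finset.sum_ite_eq']
  rw [h]
  exact (Matrix.rank_mul_le_left _ _).trans (Matrix.rank_mul_le_right _ _)

lemma two_le_rank_of_minor {m : Matrix (Fin 4) (Fin 4) ℂ} {i₁ i₂ j₁ j₂ : Fin 4}
    (h : minor m i₁ i₂ j₁ j₂ ≠ 0) : 2 ≤ m.rank := by
  have hdet : (m.submatrix ![i₁, i₂] ![j₁, j₂]).det = minor m i₁ i₂ j₁ j₂ := by
    rw [Matrix.det_fin_two]; rfl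
  have hu : IsUnit (m.submatrix ![i₁, i₂] ![j₁, j₂]) := by
    apply (Matrix.isUnit_iff_isUnit_det _).mpr
    rw [hdet]
    exact isUnit_iff_ne_zero.mpr h
  have hr := Matrix.rank_of_isUnit _ hu
  calc (2 : ℕ) = (m.submatrix ![i₁, i₂] ![j₁, j₂]).rank := by rw [hr]; simp
    _ ≤ m.rank := rank_submatrix_le' _ _ _

lemma rank_le_one_of_minors {m : Matrix (Fin 4) (Fin 4) ℂ}
    (h : ∀ i₁ i₂ j₁ j₂, minor m i₁ i₂ j₁ j₂ = 0) : m.rank ≤ 1 := by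
  by_cases hm : m = 0
  · rw [hm, Matrix.rank_zero]; norm_num
  · obtain ⟨i, j, hij⟩ : ∃ i j, m i j ≠ 0 := by
      by_contra hc
      push_neg at hc
      exact hm (by ext i j; simp [hc])
    have hfact : m = (Matrix.of fun (p : Fin 4) (_ : Fin 1) => m p j * (m i j)⁻¹) *
        (Matrix.of fun (_ : Fin 1) (q : Fin 4) => m i q) := by
      ext p q
      have hpq := h p i q j
      rw [minor] at hpq
      simp only [Matrix.mul_apply, Matrix.of_apply, Finset.univ_unique, Finset.sum_singleton]
      field_simp
      linear_combination hpq
    rw [hfact]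
    refine (Matrix.rank_mul_le_left _ _).trans ?_
    exact (Matrix.rank_le_card_width _).trans (by simp)


/-- If `(v,w)` satisfies the Plücker relations of `G(3,6)`, then
`rank v = 2 ↔ rank w = 2`. -/
theorem rank_two_iff_of_plucker (v w : Matrix (Fin 4) (Fin 4) ℂ) (h : PluckerPair v w) :
    v.rank = 2 ↔ w.rank = 2 := by
  by_cases hl : (v * w) 0 0 = 0
  · -- the product is zero
    have hvw : v * w = 0 := by
      ext i j
      by_cases hij : i = j
      · subst hij
        rw [Matrix.zero_apply, h.diag i 0, hl]
      · rw [Matrix.zero_apply]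
        exact h.offDiag i j hij
    have hwv : w * v = 0 := by
      have ht := congrArg Matrix.transpose hvw
      rwa [Matrix.transpose_mul, h.symm_v, h.symm_w, Matrix.transpose_zero] at ht
    have hsum := Matrix.rank_add_rank_le_card_of_mul_eq_zero hvw
    have hsum' := Matrix.rank_add_rank_le_card_of_mul_eq_zero hwv
    rw [Fintype.card_fin] at hsum hsum'
    constructor
    · intro hv
      have h2 : 2 ≤ w.rank := by
        have hminor : ∃ i₁ i₂ j₁ j₂, minor v i₁ i₂ j₁ j₂ ≠ 0 := by
          by_contra hc
          push_neg at hc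
          have := rank_le_one_of_minors hc
          omega
        obtain ⟨i₁, i₂, j₁, j₂, h1, h2, hne⟩ := exists_ordered_minor hminor
        rw [h.minor_rel i₁ i₂ j₁ j₂ h1 h2] at hne
        exact two_le_rank_of_minor fun hz => hne (by rw [hz, mul_zero])
      omega
    · intro hw
      have h2 : 2 ≤ v.rank := by
        have hminor : ∃ i₁ i₂ j₁ j₂, minor w i₁ i₂ j₁ j₂ ≠ 0 := by
          by_contra hc
          push_neg at hc
          have := rank_le_one_of_minors hc
          omega
        obtain ⟨i₁, i₂, j₁, j₂, h1, h2, hne⟩ := exists_ordered_minor hminor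
        have hlt₁ := dual_lt i₁ i₂ h1
        have hlt₂ := dual_lt j₁ j₂ h2
        have hrel := h.minor_rel _ _ _ _ hlt₁ hlt₂
        rw [dual_dual₁ i₁ i₂ h1, dual_dual₂ i₁ i₂ h1, dual_dual₁ j₁ j₂ h2,
          dual_dual₂ j₁ j₂ h2] at hrel
        have hvne : minor v (dual₁ i₁ i₂) (dual₂ i₁ i₂) (dual₁ j₁ j₂) (dual₂ j₁ j₂) ≠ 0 := by
          rw [hrel]
          exact mul_ne_zero (mul_ne_zero (eps_ne_zero hlt₁) (eps_ne_zero hlt₂)) hne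
        exact two_le_rank_of_minor hvne
      omega
  · -- the product is a nonzero scalar: both matrices are invertible
    set lam := (v * w) 0 0 with hlam
    have hvw : v * w = lam • (1 : Matrix (Fin 4) (Fin 4) ℂ) := by
      ext i j
      by_cases hij : i = j
      · subst hij
        simp only [Matrix.smul_apply, Matrix.one_apply_eq, smul_eq_mul, mul_one]
        exact h.diag i 0
      · simp only [Matrix.smul_apply, Matrix.one_apply_ne hij, smul_eq_mul, mul_zero]
        exact h.offDiag i j hij
    have hv1 : v * (lam⁻¹ • w) = 1 := by
      rw [Matrix.mul_smul, hvw, smul_smul, inv_mul_cancel₀ hl, one_smul]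
    have hdet : v.det * (lam⁻¹ • w).det = 1 := by
      rw [← Matrix.det_mul, hv1, Matrix.det_one]
    have hvdet : IsUnit v.det := IsUnit.of_mul_eq_one _ hdet
    have hwdet : IsUnit w.det := by
      have h2 : (lam⁻¹ • w).det ≠ 0 := by
        intro hz
        rw [hz, mul_zero] at hdet
        exact one_ne_zero hdet.symm
      rw [Matrix.det_smul, Fintype.card_fin] at h2
      exact isUnit_iff_ne_zero.mpr fun hz => h2 (by rw [hz, mul_zero])
    have hrv : v.rank = 4 := by
      rw [Matrix.rank_of_isUnit v ((Matrix.isUnit_iff_isUnit_det v).mpr hvdet),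
        Fintype.card_fin]
    have hrw : w.rank = 4 := by
      rw [Matrix.rank_of_isUnit w ((Matrix.isUnit_iff_isUnit_det w).mpr hwdet),
        Fintype.card_fin]
    rw [hrv, hrw]
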